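/- For any n-tuple f with entries in {0,...,n-1} ∪ {∞} satisfying condition (ii), the vector g defined inductively by g_i = max over 0 ≤ j ≤ f_i of (g_{i-j} + j) (with the conventions that ∞ plus an integer is ∞, and g_0 = 0) satisfies both conditions (i) and (ii), satisfies g ≥ f componentwise, and is the componentwise-least such vector: for any vector h satisfying (i) and (ii), h ≥ f componentwise if and only if h ≥ g componentwise. -/

import Mathlib

/-- Condition (i) for type `B_n` bracket vectors: for `i < j` (0-based),
if `r_j - (j-i)` is a nonnegative integer then `r_i ≤ r_j - (j-i)`
(equivalently `r_i + (j-i) ≤ r_j`; when `r_j = ∞` this holds trivially,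
matching the convention that `∞` minus an integer is `∞`). -/
def condIB (n : ℕ) (r : Fin n → ℕ∞) : Prop :=
  ∀ i j : Fin n, i < j → (((j : ℕ) - (i : ℕ) : ℕ) : ℕ∞) ≤ r j →
    r i + (((j : ℕ) - (i : ℕ) : ℕ) : ℕ∞) ≤ r j

/-- Condition (ii) for type `B_n` bracket vectors: if `∞ > r_i ≥ i`
(1-based; here `i = k+1` for the 0-based index `k`) then `r_{n+i-r_i} = ∞`. -/
def condIIB (n : ℕ) (r : Fin n → ℕ∞) : Prop :=
  ∀ (k : Fin n) (t : ℕ), r k = (t : ℕ∞) → ∀ _ht : (k : ℕ) + 1 ≤ t,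
    r ⟨n + (k : ℕ) - t, by have := k.isLt; omega⟩ = ⊤

/-- Entries lie in `{0, …, n-1} ∪ {∞}`. -/
def entriesB (n : ℕ) (r : Fin n → ℕ∞) : Prop :=
  ∀ k, r k = ⊤ ∨ r k ≤ ((n - 1 : ℕ) : ℕ∞)

/-- A type `B_n` bracket vector. -/
def isBVec (n : ℕ) (r : Fin n → ℕ∞) : Prop :=
  entriesB n r ∧ condIB n r ∧ condIIB n r

/-- The inductive closure `↑`: `g_i = max over 0 ≤ j ≤ f_i of (g_{i-j} + j)`,
with the conventions that the `j = 0` term is `f_i`, that `g_0 = 0` (so the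
term for `j = k + 1`, reaching index `0`, is just `j`), and that `∞` plus an
integer is `∞`.  Indices here are 0-based, so the index `k` corresponds to
`i = k + 1`. -/
noncomputable def upB (f : ℕ → ℕ∞) : ℕ → ℕ∞ := fun k =>
  Finset.sup (Finset.range (k + 2)) fun j =>
    if _h : 0 < j ∧ (j : ℕ∞) ≤ f k then
      (if _h2 : j ≤ k then upB f (k - j) + (j : ℕ∞) else (j : ℕ∞))
    else if j = 0 then f k else 0
termination_by k => k
decreasing_by omega

/-- The closure of an `n`-tuple, as an `n`-tuple. -/
noncomputable def upBF (n : ℕ) (f : Fin n → ℕ∞) : Fin n → ℕ∞ := fun k =>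
  upB (fun m => if h : m < n then f ⟨m, h⟩ else 0) (k : ℕ)

namespace UpBAux

lemma upB_eq (f : ℕ → ℕ∞) (k : ℕ) : upB f k =
    Finset.sup (Finset.range (k + 2)) (fun j =>
      if _h : 0 < j ∧ (j : ℕ∞) ≤ f k then
        (if _h2 : j ≤ k then upB f (k - j) + (j : ℕ∞) else (j : ℕ∞))
      else if j = 0 then f k else 0) := by
  rw [upB]

lemma f_le_upB (f : ℕ → ℕ∞) (k : ℕ) : f k ≤ upB f k := by
  have h0 : (0:ℕ) ∈ Finset.range (k+2) := by simp
  conv_rhs => rw [upB_eq]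
  refine le_trans ?_ (Finset.le_sup h0)
  simp

lemma upB_step (f : ℕ → ℕ∞) (k j : ℕ) (h1 : 0 < j) (h2 : (j:ℕ∞) ≤ f k) (h3 : j ≤ k) :
    upB f (k - j) + (j:ℕ∞) ≤ upB f k := by
  conv_rhs => rw [upB_eq]
  have h0 : j ∈ Finset.range (k+2) := by simp; omega
  refine le_trans ?_ (Finset.le_sup h0)
  rw [dif_pos ⟨h1, h2⟩, dif_pos h3]

lemma upB_top_step (f : ℕ → ℕ∞) (k : ℕ) (h2 : ((k+1:ℕ):ℕ∞) ≤ f k) :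
    ((k+1:ℕ):ℕ∞) ≤ upB f k := by
  conv_rhs => rw [upB_eq]
  have h0 : k+1 ∈ Finset.range (k+2) := by simp
  refine le_trans ?_ (Finset.le_sup h0)
  rw [dif_pos ⟨Nat.succ_pos k, h2⟩, dif_neg (by omega)]

lemma upB_cases (f : ℕ → ℕ∞) (k t : ℕ) (h : upB f k = (t:ℕ∞)) (ht : 1 ≤ t) :
    f k = (t:ℕ∞) ∨ (t = k+1 ∧ ((k+1:ℕ):ℕ∞) ≤ f k) ∨
    ∃ j, 0 < j ∧ j ≤ k ∧ j ≤ t ∧ (j:ℕ∞) ≤ f k ∧ upB f (k-j) = ((t-j:ℕ):ℕ∞) := by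
  rw [upB_eq] at h
  obtain ⟨j₀, hj₀mem, hj₀⟩ :=
    Finset.exists_mem_eq_sup (Finset.range (k+2)) ⟨0, by simp⟩
      (fun j => if _h : 0 < j ∧ (j : ℕ∞) ≤ f k then
        (if _h2 : j ≤ k then upB f (k - j) + (j : ℕ∞) else (j : ℕ∞))
      else if j = 0 then f k else 0)
  rw [h] at hj₀
  simp only [Finset.mem_range] at hj₀mem
  by_cases hc : 0 < j₀ ∧ (j₀ : ℕ∞) ≤ f k
  · rw [dif_pos hc] at hj₀
    by_cases hk : j₀ ≤ k
    · rw [dif_pos hk] at hj₀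
      rcases eq_or_ne (upB f (k - j₀)) ⊤ with htop | htop
      · rw [htop] at hj₀; simp at hj₀
      lift upB f (k - j₀) to ℕ using htop with m hm
      have : t = m + j₀ := by exact_mod_cast hj₀
      refine Or.inr (Or.inr ⟨j₀, hc.1, hk, by omega, hc.2, ?_⟩)
      rw [← hm]
      congr 1
      omega
    · rw [dif_neg hk] at hj₀
      have : t = j₀ := by exact_mod_cast hj₀
      exact Or.inr (Or.inl ⟨by omega, by rw [show k+1 = j₀ by omega]; exact hc.2⟩)
  · rw [dif_neg hc] at hj₀
    by_cases h0 : j₀ = 0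
    · rw [if_pos h0] at hj₀
      exact Or.inl hj₀.symm
    · rw [if_neg h0] at hj₀
      have : (t:ℕ∞) = 0 := hj₀
      have : t = 0 := by exact_mod_cast this
      omega

lemma upB_condI (f : ℕ → ℕ∞) : ∀ k d : ℕ, d ≤ k → (d:ℕ∞) ≤ upB f k →
    upB f (k-d) + (d:ℕ∞) ≤ upB f k := by
  intro k
  induction k using Nat.strong_induction_on with
  | _ k IH =>
    intro d hdk hdg
    rcases Nat.eq_zero_or_pos d with hd0 | hd0
    · subst hd0; simp
    by_cases hdf : (d:ℕ∞) ≤ f k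
    · exact upB_step f k d hd0 hdf hdk
    rcases eq_or_ne (upB f k) ⊤ with htop | htop
    · rw [htop]; exact le_top
    lift upB f k to ℕ using htop with t ht
    have hdt : d ≤ t := by exact_mod_cast hdg
    rcases upB_cases f k t ht.symm (by omega) with h1 | h2 | ⟨j, hj0, hjk, hjt, hjf, hrec⟩
    · exact absurd (h1 ▸ (by exact_mod_cast hdt : (d:ℕ∞) ≤ (t:ℕ∞))) hdf
    · exact absurd (le_trans (by exact_mod_cast (by omega : d ≤ k+1)) h2.2) hdf
    · have hjd : j < d := by
        by_contra hc
        exact hdf (le_trans (by exact_mod_cast (by omega : d ≤ j)) hjf)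
      have hrec' : ((d-j:ℕ):ℕ∞) ≤ upB f (k-j) := by
        rw [hrec]; exact_mod_cast (by omega : d - j ≤ t - j)
      have := IH (k-j) (by omega) (d-j) (by omega) hrec'
      rw [hrec, show (k-j)-(d-j) = k-d by omega] at this
      rcases eq_or_ne (upB f (k-d)) ⊤ with htop2 | htop2
      · rw [htop2] at this; simp at this
      lift upB f (k-d) to ℕ using htop2 with m hm
      have hmt : m + (d-j) ≤ t - j := by exact_mod_cast this
      exact_mod_cast (by omega : m + d ≤ t)



lemma upB_condII (n : ℕ) (f : ℕ → ℕ∞)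
    (hf0 : ∀ m, m < n → f m = ⊤ ∨ f m ≤ ((n-1:ℕ):ℕ∞))
    (hf2 : ∀ m, m < n → ∀ s : ℕ, f m = (s:ℕ∞) → m+1 ≤ s → f (n+m-s) = ⊤) :
    ∀ k : ℕ, k < n → ∀ t : ℕ, upB f k = (t:ℕ∞) → k+1 ≤ t →
      t ≤ n + k ∧ f (n+k-t) = ⊤ := by
  intro k
  induction k using Nat.strong_induction_on with
  | _ k IH =>
    intro hk t hgt ht
    rcases upB_cases f k t hgt (by omega) with h1 | ⟨h2a, h2b⟩ |
      ⟨j, hj0, hjk, hjt, hjf, hrec⟩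
    · have hT := hf2 k hk t h1 ht
      have htn : t ≤ n - 1 := by
        rcases hf0 k hk with htop | hle
        · rw [h1] at htop; exact absurd htop (by simp)
        · rw [h1] at hle; exact_mod_cast hle
      exact ⟨by omega, hT⟩
    · have hfk : f k ≤ (t:ℕ∞) := hgt ▸ f_le_upB f k
      have hne : f k ≠ ⊤ := fun hc => by rw [hc] at hfk; simp at hfk
      lift f k to ℕ using hne with s hs
      have hs1 : k+1 ≤ s := by exact_mod_cast h2b
      have hs2 : s ≤ t := by exact_mod_cast hfk
      have hst : s = t := by omega
      subst hst
      exact ⟨by omega, hf2 k hk s hs.symm hs1⟩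
    · have hjt' : j < t := by omega
      obtain ⟨hle, hT⟩ := IH (k-j) (by omega) (by omega) (t-j) hrec (by omega)
      refine ⟨by omega, ?_⟩
      rw [show n+k-t = n+(k-j)-(t-j) by omega]
      exact hT

lemma upB_le (n : ℕ) (f : ℕ → ℕ∞) (h : Fin n → ℕ∞)
    (hfh : ∀ k (hk : k < n), f k ≤ h ⟨k, hk⟩)
    (hh1 : ∀ i j : Fin n, i < j → (((j : ℕ) - (i : ℕ) : ℕ) : ℕ∞) ≤ h j →
      h i + (((j : ℕ) - (i : ℕ) : ℕ) : ℕ∞) ≤ h j) :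
    ∀ k (hk : k < n), upB f k ≤ h ⟨k, hk⟩ := by
  intro k
  induction k using Nat.strong_induction_on with
  | _ k IH =>
    intro hk
    rw [upB_eq]
    apply Finset.sup_le
    intro j hj
    simp only [Finset.mem_range] at hj
    by_cases hc : 0 < j ∧ (j:ℕ∞) ≤ f k
    · rw [dif_pos hc]
      by_cases hjk : j ≤ k
      · rw [dif_pos hjk]
        have h1 : upB f (k-j) ≤ h ⟨k-j, by omega⟩ := IH (k-j) (by omega) (by omega)
        have e2 : k - (k - j) = j := by omega
        have h2 := hh1 ⟨k-j, by omega⟩ ⟨k, hk⟩ (by simp only [Fin.mk_lt_mk]; omega)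
          (by simp only [Fin.val_mk, e2]; exact le_trans hc.2 (hfh k hk))
        simp only [Fin.val_mk, e2] at h2
        exact le_trans (add_le_add_left h1 _) h2
      · rw [dif_neg hjk]
        have : ((k+1:ℕ):ℕ∞) ≤ f k := by
          refine le_trans ?_ hc.2; exact_mod_cast (by omega : k+1 ≤ j)
        calc (j:ℕ∞) ≤ f k := hc.2
          _ ≤ h ⟨k, hk⟩ := hfh k hk
    · rw [dif_neg hc]
      split
      · exact hfh k hk
      · exact zero_le
end UpBAux


/-- For any `f` with entries in `{0,…,n-1} ∪ {∞}` satisfying condition (ii),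
the vector `g = ↑(f)` defined by `g_i = max_{0 ≤ j ≤ f_i} (g_{i-j} + j)`
satisfies conditions (i) and (ii), satisfies `g ≥ f`, and is componentwise
least such: for any vector `h` satisfying (i) and (ii), `h ≥ f` iff `h ≥ g`. -/
theorem upB_spec (n : ℕ) (f : Fin n → ℕ∞)
    (hf0 : entriesB n f) (hf2 : condIIB n f) :
    condIB n (upBF n f) ∧ condIIB n (upBF n f) ∧ f ≤ upBF n f ∧
      ∀ h : Fin n → ℕ∞, entriesB n h → condIB n h → condIIB n h →
        (f ≤ h ↔ upBF n f ≤ h) := by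
  set f' : ℕ → ℕ∞ := fun m => if h : m < n then f ⟨m, h⟩ else 0 with hf'
  have hfk : ∀ (k:ℕ) (hk : k < n), f' k = f ⟨k, hk⟩ := fun k hk => dif_pos hk
  have hflef : f ≤ upBF n f := by
    intro k
    have := UpBAux.f_le_upB f' (k:ℕ)
    rwa [hfk _ k.isLt, Fin.eta] at this
  have hent : ∀ m, m < n → f' m = ⊤ ∨ f' m ≤ ((n-1:ℕ):ℕ∞) := by
    intro m hm; rw [hfk m hm]; exact hf0 ⟨m, hm⟩
  have hcii : ∀ m, m < n → ∀ s : ℕ, f' m = (s:ℕ∞) → m+1 ≤ s → f' (n+m-s) = ⊤ := by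
    intro m hm s hs hms
    rw [hfk m hm] at hs
    have := hf2 ⟨m, hm⟩ s hs hms
    rw [hfk (n+m-s) (by omega)]
    exact this
  refine ⟨?_, ?_, hflef, ?_⟩
  · intro i j hij hle
    have hij' : (i:ℕ) < (j:ℕ) := hij
    have := UpBAux.upB_condI f' (j:ℕ) ((j:ℕ) - (i:ℕ)) (by omega) hle
    rwa [show (j:ℕ) - ((j:ℕ) - (i:ℕ)) = (i:ℕ) by omega] at this
  · intro k t hkt ht
    obtain ⟨h1, h2⟩ := UpBAux.upB_condII n f' hent hcii (k:ℕ) k.isLt t hkt ht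
    refine le_antisymm le_top ?_
    have := UpBAux.f_le_upB f' (n + (k:ℕ) - t)
    rw [h2] at this
    exact this
  · intro h hh0 hh1 hh2
    constructor
    · intro hfh k
      have := UpBAux.upB_le n f' h
        (fun m hm => by rw [hfk m hm]; exact hfh ⟨m, hm⟩) hh1 (k:ℕ) k.isLt
      rwa [Fin.eta] at this
    · intro hgh k
      exact le_trans (hflef k) (hgh k)
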